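/- For every positive integer n, r_{5,1}(n) = ⌊(d(6n² + 1) - 1)/2⌋. -/

import Mathlib

/-- The `c`-th `m`-gonal number: `P(m,c) = c((m-2)c - (m-4))/2`. -/
def polygonal (m c : ℤ) : ℤ := c * ((m - 2) * c - (m - 4)) / 2

/-- `r_{m,t}(n)`: the number of unordered pairs `{a,b}` of positive integers with
`a + b = n` such that `ab = t·P(m,c)` for some `c`, where `c` ranges over positive
integers if `m = 3` or `m = 4`, and over all integers if `m > 4`. -/
noncomputable def rmt (m t n : ℕ) : ℕ :=
  Set.ncard {p : ℕ × ℕ | 0 < p.1 ∧ p.1 ≤ p.2 ∧ p.1 + p.2 = n ∧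
    ∃ c : ℤ, ((m = 3 ∨ m = 4) → 0 < c) ∧ (p.1 : ℤ) * p.2 = t * polygonal m c}

/-- `r'_{m,t}(n)`: the number of pairs `(x,y)` of nonnegative integers with
`2(m-2)n² + t(m-4)² = 2(m-2)x² + t y²`. -/
noncomputable def rmt' (m t n : ℕ) : ℕ :=
  Set.ncard {p : ℕ × ℕ |
    2 * ((m : ℤ) - 2) * (n : ℤ) ^ 2 + t * ((m : ℤ) - 4) ^ 2 =
    2 * ((m : ℤ) - 2) * (p.1 : ℤ) ^ 2 + t * (p.2 : ℤ) ^ 2}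

/-- `d_A(n)`: the number of positive divisors of `n` not divisible by any prime in `A`.
Equivalently, `∏_{p prime, p ∉ A} (1 + ord_p(n))`. -/
def dA (A : Finset ℕ) (n : ℕ) : ℕ :=
  (n.divisors.filter (fun d => ∀ p ∈ A, ¬ p ∣ d)).card

lemma odd_sq_eq (t : ℤ) (h : Odd t) : ∃ u : ℤ, t^2 = 8*u+1 := by
  obtain ⟨k, rfl⟩ := h
  obtain ⟨u, hu⟩ := Int.even_mul_succ_self k
  exact ⟨u, by rw [show (2*k+1)^2 = 4*(k*(k+1))+1 by ring, hu]; ring⟩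

lemma parity_lemma (s y m : ℤ) (h : s^2 + 6*y^2 = 6*m^2+1) : Even (y - m) := by
  have hodd : Odd s := by
    rcases Int.even_or_odd s with he | ho
    · exfalso; obtain ⟨k, rfl⟩ := he
      have : 2*(2*k^2 + 3*y^2) = 2*(3*m^2)+1 := by ring_nf; ring_nf at h; linarith
      omega
    · exact ho
  obtain ⟨u, hu⟩ := odd_sq_eq s hodd
  rcases Int.even_or_odd y with hy | hy <;> rcases Int.even_or_odd m with hm | hm
  · exact (hy.sub hm)
  · exfalso
    obtain ⟨a, rfl⟩ := hy
    obtain ⟨v, hv⟩ := odd_sq_eq m hm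
    have ha : (a+a)^2 = 4*a^2 := by ring
    rw [hu, ha, hv] at h
    have := sq_nonneg a
    omega
  · exfalso
    obtain ⟨b, rfl⟩ := hm
    obtain ⟨w, hw⟩ := odd_sq_eq y hy
    have hb : (b+b)^2 = 4*b^2 := by ring
    rw [hu, hb, hw] at h
    omega
  · exact (Odd.sub_odd hy hm)

lemma copN6 (n : ℕ) : Nat.Coprime (6*n^2+1) 6 := by
  have : 6*n^2+1 = 1 + 6*n^2 := by ring
  rw [this, Nat.coprime_add_mul_left_left 1 6 (n^2)]
  exact Nat.coprime_one_left 6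

lemma copNn (n : ℕ) : Nat.Coprime (6*n^2+1) n := by
  have : 6*n^2+1 = 1 + n*(6*n) := by ring
  rw [this]
  rw [Nat.coprime_add_mul_left_left 1 n (6*n)]
  exact Nat.coprime_one_left n

lemma copN2 (n : ℕ) : Nat.Coprime (6*n^2+1) 2 := (copN6 n).coprime_dvd_right (by norm_num)

lemma prodDvd (n : ℕ) (M : ℕ) (hMN : M ∣ 6*n^2+1) (x y : ℤ)
    (h : x^2 + 6*y^2 = (M:ℤ)) : (M:ℤ) ∣ ((n:ℤ)*x - y)*((n:ℤ)*x + y) := by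
  have h6 : (M:ℤ) ∣ 6*(((n:ℤ)*x - y)*((n:ℤ)*x + y)) := by
    have key : 6*(((n:ℤ)*x - y)*((n:ℤ)*x + y)) = ((6*(n:ℤ)^2+1))*x^2 - (M:ℤ) := by
      rw [← h]; ring
    rw [key]
    have h1 : (M:ℤ) ∣ (6*(n:ℤ)^2+1) := by exact_mod_cast Int.natCast_dvd_natCast.mpr hMN
    exact dvd_sub (h1.mul_right _) dvd_rfl
  have hcop : IsCoprime (M:ℤ) 6 := by
    rw [Int.isCoprime_iff_gcd_eq_one]
    have : Nat.Coprime M 6 := Nat.Coprime.coprime_dvd_left hMN (copN6 n)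
    simpa [Int.gcd] using this
  exact hcop.dvd_of_dvd_mul_left h6

lemma M1_ne_zero (M₁ : ℕ) (X Y : ℤ) (hcop : Int.gcd X Y = 1)
    (hM1 : X^2+6*Y^2 = (M₁:ℤ)) : M₁ ≠ 0 := by
  intro h0
  rw [h0] at hM1; push_cast at hM1
  have hX : X = 0 := by nlinarith [sq_nonneg X, sq_nonneg Y]
  have hY : Y = 0 := by nlinarith [sq_nonneg X, sq_nonneg Y]
  rw [hX, hY] at hcop
  simp [Int.gcd] at hcop

lemma stripClaim (n g M₁ : ℕ) (p : ℕ) (hp : p.Prime) (hpg : p ∣ g)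
    (X Y z w : ℤ) (hcop : Int.gcd X Y = 1) (hM1 : X^2+6*Y^2 = (M₁:ℤ))
    (hdvd : g^2*M₁ ∣ 6*n^2+1)
    (hzw : z*w = ((n:ℤ)*X - Y)*((n:ℤ)*X + Y)) (hsum : z + w = 2*(n:ℤ)*X)
    (hzY : (p:ℤ) ∣ z → (p:ℤ) ∣ X → (p:ℤ) ∣ Y) :
    ¬ ((p:ℤ)^(M₁.factorization p + 1) ∣ z) := by
  intro hdvdz
  set κ := M₁.factorization p with hκ
  have hM1ne : M₁ ≠ 0 := M1_ne_zero M₁ X Y hcop hM1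
  have hNne : 6*n^2+1 ≠ 0 := by positivity
  have hpz : (p:ℤ) ∣ z := dvd_trans (dvd_pow_self (p:ℤ) (Nat.succ_ne_zero κ)) hdvdz
  -- p ∣ N
  have hgM : g^2*M₁ ≠ 0 := by
    intro h0; rw [h0] at hdvd; exact hNne (Nat.eq_zero_of_zero_dvd hdvd)
  have hpN : p ∣ 6*n^2+1 := by
    refine dvd_trans ?_ hdvd
    exact Dvd.dvd.mul_right (dvd_trans hpg (dvd_pow_self g two_ne_zero)) M₁
  have hp6 : ¬ p ∣ 6 := by
    intro h6
    have := Nat.dvd_gcd hpN h6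
    rw [(copN6 n)] at this
    exact hp.one_lt.ne' (Nat.eq_one_of_dvd_one this)
  have hpn : ¬ p ∣ n := by
    intro hn
    have := Nat.dvd_gcd hpN hn
    rw [(copNn n)] at this
    exact Nat.Prime.one_lt hp |>.ne' (Nat.eq_one_of_dvd_one this)
  -- p ∤ X
  have hpX : ¬ (p:ℤ) ∣ X := by
    intro hX
    have hY := hzY hpz hX
    have : (p:ℤ) ∣ (Int.gcd X Y : ℤ) := Int.dvd_coe_gcd hX hY
    rw [hcop] at this
    have := Int.le_of_dvd one_pos this
    have := hp.one_lt
    omega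
  -- p ∤ w
  have hpw : ¬ (p:ℤ) ∣ w := by
    intro hw
    have h2nX : (p:ℤ) ∣ 2*(n:ℤ)*X := hsum ▸ dvd_add hpz hw
    have hcp2 : IsCoprime (p:ℤ) 2 := by
      rw [Int.isCoprime_iff_gcd_eq_one]
      have : Nat.Coprime p 2 := hp.coprime_iff_not_dvd.mpr (fun h => hp6 (h.trans (by norm_num)))
      simpa [Int.gcd] using this
    have hcpn : IsCoprime (p:ℤ) (n:ℤ) := by
      rw [Int.isCoprime_iff_gcd_eq_one]
      have : Nat.Coprime p n := hp.coprime_iff_not_dvd.mpr hpn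
      simpa [Int.gcd] using this
    have : (p:ℤ) ∣ (n:ℤ)*X := by
      have := hcp2.dvd_of_dvd_mul_left (show (p:ℤ) ∣ 2*((n:ℤ)*X) by rw [← mul_assoc]; exact h2nX)
      exact this
    exact hpX (hcpn.dvd_of_dvd_mul_left this)
  -- p^(κ+2) ∣ N
  have hpk2 : p^(κ+2) ∣ 6*n^2+1 := by
    refine dvd_trans ?_ hdvd
    have h1 : p^2 ∣ g^2 := pow_dvd_pow_of_dvd hpg 2
    have h2 : p^κ ∣ M₁ := Nat.ordProj_dvd M₁ p
    calc p^(κ+2) = p^2 * p^κ := by ring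
    _ ∣ g^2*M₁ := mul_dvd_mul h1 h2
  -- conclude p^(κ+1) ∣ M₁
  have hIdent : (M₁:ℤ) = ((6*n^2+1 : ℕ):ℤ)*X^2 - 6*(z*w) := by
    rw [hzw]; push_cast; rw [← hM1]; ring
  have hd1 : (p:ℤ)^(κ+1) ∣ ((6*n^2+1 : ℕ):ℤ) := by
    have : (p:ℕ)^(κ+1) ∣ 6*n^2+1 := dvd_trans (pow_dvd_pow p (by omega)) hpk2
    exact_mod_cast Int.natCast_dvd_natCast.mpr this
  have hd2 : (p:ℤ)^(κ+1) ∣ (M₁:ℤ) := by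
    rw [hIdent]
    exact dvd_sub (hd1.mul_right _) (Dvd.dvd.mul_left (hdvdz.mul_right w) 6)
  have : (p:ℕ)^(κ+1) ∣ M₁ := by exact_mod_cast hd2
  rw [hp.pow_dvd_iff_le_factorization hM1ne] at this
  omega

lemma bridge (n g M₁ : ℕ) (X Y : ℤ) (hcop : Int.gcd X Y = 1)
    (hM1 : X^2+6*Y^2 = (M₁:ℤ)) (hdvd : g^2*M₁ ∣ 6*n^2+1) (hg : g ≠ 0)
    (z w : ℤ)
    (hzw : z*w = ((n:ℤ)*X - Y)*((n:ℤ)*X + Y)) (hsum : z + w = 2*(n:ℤ)*X)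
    (hzXY : ∀ q : ℤ, q ∣ z → q ∣ X → q ∣ Y) :
    Nat.gcd (g*M₁) z.natAbs = Nat.gcd M₁ z.natAbs := by
  have hM1ne : M₁ ≠ 0 := M1_ne_zero M₁ X Y hcop hM1
  have hNne : 6*n^2+1 ≠ 0 := by positivity
  apply Nat.dvd_antisymm
  · -- gcd (g*M₁) z ∣ gcd M₁ z ; suffices gcd (g*M₁) z ∣ M₁
    apply Nat.dvd_gcd ?_ (Nat.gcd_dvd_right _ _)
    by_cases hz : z = 0
    · -- then g = 1
      subst hz
      have hY : Y = (n:ℤ)*X ∨ Y = -((n:ℤ)*X) := by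
        have h0 : ((n:ℤ)*X - Y)*((n:ℤ)*X + Y) = 0 := by rw [← hzw]; ring
        rcases mul_eq_zero.mp h0 with h | h
        · left; linarith
        · right; linarith
      have hM1X : (M₁:ℤ) = X^2 * ((6*n^2+1 : ℕ):ℤ) := by
        rcases hY with h | h <;> (rw [← hM1, h]; push_cast; ring)
      have : M₁ = X.natAbs^2 * (6*n^2+1) := by
        have : (M₁:ℤ) = ((X.natAbs^2 * (6*n^2+1) : ℕ):ℤ) := by
          rw [hM1X]; push_cast; rw [sq_abs]
        exact_mod_cast this
      rw [this] at hdvd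
      have hXne : X.natAbs ≠ 0 := by
        intro hX0
        have hX0' : X = 0 := Int.natAbs_eq_zero.mp hX0
        rcases hY with h | h <;> (rw [hX0'] at h; simp at h; rw [hX0', h] at hcop; simp [Int.gcd] at hcop)
      have hgone : g = 1 := by
        by_contra hgne
        have h1 : (g^2 * X.natAbs^2) * (6*n^2+1) ∣ 6*n^2+1 := by
          rw [mul_assoc]; exact hdvd
        have h2 := Nat.le_of_dvd (by positivity) h1
        have hg2 : 2 ≤ g := by omega
        have hX1 : 1 ≤ X.natAbs := by omega
        have hNpos : 1 ≤ 6*n^2+1 := by omega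
        have h4 : 4 ≤ g^2 * X.natAbs^2 := by
          calc 4 = 2*2*(1*1) := by norm_num
          _ ≤ g*g*(X.natAbs*X.natAbs) := by
            exact Nat.mul_le_mul (Nat.mul_le_mul hg2 hg2) (Nat.mul_le_mul hX1 hX1)
          _ = g^2 * X.natAbs^2 := by ring
        have : 4*(6*n^2+1) ≤ g^2 * X.natAbs^2 * (6*n^2+1) :=
          Nat.mul_le_mul_right _ h4
        omega
      simp [hgone]
    · -- factorization argument
      have hzabs : z.natAbs ≠ 0 := fun h => hz (Int.natAbs_eq_zero.mp h)
      have hgM1ne : g*M₁ ≠ 0 := by positivity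
      have hDne : Nat.gcd (g*M₁) z.natAbs ≠ 0 := fun h => hzabs (Nat.eq_zero_of_gcd_eq_zero_right h)
      rw [← Nat.factorization_le_iff_dvd hDne hM1ne]
      rw [Finsupp.le_def]
      intro p
      by_cases hp : p.Prime
      · by_cases hpg : p ∣ g
        · -- key: v_p(z) ≤ κ
          have hns := stripClaim n g M₁ p hp hpg X Y z w hcop hM1 hdvd hzw hsum
            (fun h1 h2 => hzXY (p:ℤ) h1 h2)
          have h1 : (Nat.gcd (g*M₁) z.natAbs).factorization p ≤ z.natAbs.factorization p := by
            have := (Nat.factorization_le_iff_dvd hDne hzabs).mpr (Nat.gcd_dvd_right _ _)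
            exact this p
          refine h1.trans ?_
          by_contra hlt
          push_neg at hlt
          have : p^(M₁.factorization p + 1) ∣ z.natAbs := by
            rw [hp.pow_dvd_iff_le_factorization hzabs]; omega
          have h2 : ((p^(M₁.factorization p + 1):ℕ):ℤ) ∣ ((z.natAbs:ℕ):ℤ) :=
            Int.natCast_dvd_natCast.mpr this
          exact hns (by exact_mod_cast Int.dvd_natAbs.mp h2)
        · have h1 : (Nat.gcd (g*M₁) z.natAbs).factorization p ≤ (g*M₁).factorization p := by
            have := (Nat.factorization_le_iff_dvd hDne hgM1ne).mpr (Nat.gcd_dvd_left _ _)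
            exact this p
          rwa [Nat.factorization_mul (by omega) hM1ne, Finsupp.add_apply,
            Nat.factorization_eq_zero_of_not_dvd hpg, zero_add] at h1
      · simp [Nat.factorization_eq_zero_of_not_prime _ hp]
  · exact Nat.dvd_gcd ((Nat.gcd_dvd_left _ _).trans (dvd_mul_left _ _)) (Nat.gcd_dvd_right _ _)

lemma primProd (n M₁ : ℕ) (hMN : M₁ ∣ 6*n^2+1) (X Y : ℤ) (hcop : Int.gcd X Y = 1)
    (hM1 : X^2+6*Y^2 = (M₁:ℤ)) :
    Nat.gcd M₁ ((n:ℤ)*X - Y).natAbs * Nat.gcd M₁ ((n:ℤ)*X + Y).natAbs = M₁ := by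
  set z := (n:ℤ)*X - Y with hz
  set w := (n:ℤ)*X + Y with hw
  set G₁ := Nat.gcd M₁ z.natAbs with hG1
  set G₂ := Nat.gcd M₁ w.natAbs with hG2
  have hcopG : Nat.Coprime G₁ G₂ := by
    set h := Nat.gcd G₁ G₂ with hh
    have hM : h ∣ M₁ := (Nat.gcd_dvd_left G₁ G₂).trans (Nat.gcd_dvd_left _ _)
    have hzd : (h:ℤ) ∣ z := by
      have : h ∣ z.natAbs := (Nat.gcd_dvd_left G₁ G₂).trans (Nat.gcd_dvd_right _ _)
      exact Int.dvd_natAbs.mp (Int.natCast_dvd_natCast.mpr this)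
    have hwd : (h:ℤ) ∣ w := by
      have : h ∣ w.natAbs := (Nat.gcd_dvd_right G₁ G₂).trans (Nat.gcd_dvd_right _ _)
      exact Int.dvd_natAbs.mp (Int.natCast_dvd_natCast.mpr this)
    have h2nX : (h:ℤ) ∣ 2*((n:ℤ)*X) := by
      have : z + w = 2*((n:ℤ)*X) := by rw [hz, hw]; ring
      exact this ▸ dvd_add hzd hwd
    have h2Y : (h:ℤ) ∣ 2*Y := by
      have : w - z = 2*Y := by rw [hz, hw]; ring
      exact this ▸ dvd_sub hwd hzd
    have hcop2 : IsCoprime (h:ℤ) 2 := by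
      rw [Int.isCoprime_iff_gcd_eq_one]
      have : Nat.Coprime h 2 := Nat.Coprime.coprime_dvd_left (hM.trans hMN) (copN2 n)
      simpa [Int.gcd] using this
    have hcopn : IsCoprime (h:ℤ) (n:ℤ) := by
      rw [Int.isCoprime_iff_gcd_eq_one]
      have : Nat.Coprime h n := Nat.Coprime.coprime_dvd_left (hM.trans hMN) (copNn n)
      simpa [Int.gcd] using this
    have hX : (h:ℤ) ∣ X := hcopn.dvd_of_dvd_mul_left (hcop2.dvd_of_dvd_mul_left h2nX)
    have hY : (h:ℤ) ∣ Y := hcop2.dvd_of_dvd_mul_left h2Y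
    have : (h:ℤ) ∣ (Int.gcd X Y : ℤ) := Int.dvd_coe_gcd hX hY
    rw [hcop] at this
    exact Nat.eq_one_of_dvd_one (by exact_mod_cast this)
  apply Nat.dvd_antisymm
  · exact Nat.Coprime.mul_dvd_of_dvd_of_dvd hcopG (Nat.gcd_dvd_left _ _) (Nat.gcd_dvd_left _ _)
  · have hzw : (M₁:ℤ) ∣ z*w := prodDvd n M₁ hMN X Y hM1
    have hnat : M₁ ∣ z.natAbs * w.natAbs := by
      rw [← Int.natAbs_mul]
      have := Int.natAbs_dvd_natAbs.mpr hzw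
      simpa using this
    have h1 : Nat.gcd M₁ (z.natAbs * w.natAbs) = M₁ := Nat.gcd_eq_left hnat
    have h2 : Nat.gcd M₁ (z.natAbs * w.natAbs) ∣ G₁ * G₂ := by
      have := gcd_mul_dvd_mul_gcd M₁ z.natAbs w.natAbs
      simpa [gcd_eq_nat_gcd] using this
    rw [h1] at h2
    exact h2

-- full key lemma

lemma keyProd (n M : ℕ) (hMN : M ∣ 6*n^2+1) (x y : ℤ) (h : x^2+6*y^2 = (M:ℤ)) :
    Nat.gcd M ((n:ℤ)*x - y).natAbs * Nat.gcd M ((n:ℤ)*x + y).natAbs = M := by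
  have hNne : 6*n^2+1 ≠ 0 := by positivity
  set g := Int.gcd x y with hg
  have hgne : g ≠ 0 := by
    intro h0
    rw [hg] at h0
    have hx : x = 0 := Int.natAbs_eq_zero.mp (Nat.eq_zero_of_gcd_eq_zero_left h0)
    have hy : y = 0 := Int.natAbs_eq_zero.mp (Nat.eq_zero_of_gcd_eq_zero_right h0)
    rw [hx, hy] at h
    norm_num at h
    have hM0 : M = 0 := by exact_mod_cast h.symm
    rw [hM0] at hMN
    exact hNne (Nat.eq_zero_of_zero_dvd hMN)
  have hgd_x : ((g:ℤ)) ∣ x := Int.gcd_dvd_left x y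
  have hgd_y : ((g:ℤ)) ∣ y := Int.gcd_dvd_right x y
  set X := x / (g:ℤ) with hXdef
  set Y := y / (g:ℤ) with hYdef
  have hX : (g:ℤ) * X = x := Int.mul_ediv_cancel' hgd_x
  have hY : (g:ℤ) * Y = y := Int.mul_ediv_cancel' hgd_y
  have hcopXY : Int.gcd X Y = 1 := Int.gcd_div_gcd_div_gcd (by omega : 0 < Int.gcd x y)
  set M₁ := (X^2 + 6*Y^2).toNat with hM1def
  have hM1cast : (M₁:ℤ) = X^2+6*Y^2 := Int.toNat_of_nonneg (by positivity)
  have hMg : M = g^2 * M₁ := by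
    have hc : (M:ℤ) = ((g^2*M₁ : ℕ):ℤ) := by
      push_cast
      rw [hM1cast, ← h, ← hX, ← hY]; ring
    exact_mod_cast hc
  have hdvd : g^2*M₁ ∣ 6*n^2+1 := hMg ▸ hMN
  have hbm := bridge n g M₁ X Y hcopXY hM1cast.symm hdvd hgne
    ((n:ℤ)*X - Y) ((n:ℤ)*X + Y) rfl (by ring)
    (fun q h1 h2 => by
      have hq : Y = (n:ℤ)*X - ((n:ℤ)*X - Y) := by ring
      rw [hq]; exact dvd_sub (h2.mul_left _) h1)
  have hbp := bridge n g M₁ X Y hcopXY hM1cast.symm hdvd hgne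
    ((n:ℤ)*X + Y) ((n:ℤ)*X - Y) (by ring) (by ring)
    (fun q h1 h2 => by
      have hq : Y = ((n:ℤ)*X + Y) - (n:ℤ)*X := by ring
      rw [hq]; exact dvd_sub h1 (h2.mul_left _))
  have hx' : (n:ℤ)*x - y = (g:ℤ)*((n:ℤ)*X - Y) := by rw [← hX, ← hY]; ring
  have hx'' : (n:ℤ)*x + y = (g:ℤ)*((n:ℤ)*X + Y) := by rw [← hX, ← hY]; ring
  have habs : ∀ z:ℤ, ((g:ℤ)*z).natAbs = g * z.natAbs := by
    intro z; rw [Int.natAbs_mul, Int.natAbs_natCast]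
  rw [hx', hx'', hMg, habs, habs]
  have e1 : ∀ z : ℕ, Nat.gcd (g^2*M₁) (g * z) = g * Nat.gcd (g*M₁) z := by
    intro z
    rw [show g^2*M₁ = g*(g*M₁) by ring, Nat.gcd_mul_left]
  rw [e1, e1, hbm, hbp]
  have hpp := primProd n M₁ ((dvd_mul_left M₁ (g^2)).trans hdvd) X Y hcopXY hM1cast.symm
  calc g * Nat.gcd M₁ ((n:ℤ)*X - Y).natAbs * (g * Nat.gcd M₁ ((n:ℤ)*X + Y).natAbs)
      = g^2 * (Nat.gcd M₁ ((n:ℤ)*X - Y).natAbs * Nat.gcd M₁ ((n:ℤ)*X + Y).natAbs) := by ring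
    _ = g^2 * M₁ := by rw [hpp]

lemma natdvd_int {d : ℕ} {z : ℤ} (h : d ∣ z.natAbs) : (d:ℤ) ∣ z :=
  Int.dvd_natAbs.mp (Int.natCast_dvd_natCast.mpr h)

lemma injPhi (n : ℕ) (x y x' y' : ℤ) (hx : 1 ≤ x) (hx' : 1 ≤ x')
    (hsol : x^2+6*y^2 = ((6*n^2+1:ℕ):ℤ)) (hsol' : x'^2+6*y'^2 = ((6*n^2+1:ℕ):ℤ))
    (heq : Nat.gcd (6*n^2+1) ((n:ℤ)*x - y).natAbs = Nat.gcd (6*n^2+1) ((n:ℤ)*x' - y').natAbs) :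
    x = x' ∧ y = y' := by
  set N := 6*n^2+1 with hNdef
  have hNne : N ≠ 0 := by positivity
  have hN1 : 1 ≤ (N:ℤ) := by exact_mod_cast Nat.one_le_iff_ne_zero.mpr hNne
  set d := Nat.gcd N ((n:ℤ)*x - y).natAbs with hd
  set e := Nat.gcd N ((n:ℤ)*x + y).natAbs with he
  set e' := Nat.gcd N ((n:ℤ)*x' + y').natAbs with he'
  have hk1 : d * e = N := keyProd n N dvd_rfl x y hsol
  have hk2 : d * e' = N := heq ▸ keyProd n N dvd_rfl x' y' hsol'
  have hdne : d ≠ 0 := by intro h0; rw [h0] at hk1; simp at hk1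
  have hee : e = e' := Nat.eq_of_mul_eq_mul_left (Nat.pos_of_ne_zero hdne) (hk1.trans hk2.symm)
  -- divisibilities
  have hdm : (d:ℤ) ∣ ((n:ℤ)*x - y) := natdvd_int (Nat.gcd_dvd_right _ _)
  have hdm' : (d:ℤ) ∣ ((n:ℤ)*x' - y') := heq ▸ natdvd_int (Nat.gcd_dvd_right _ _)
  have hep : (e:ℤ) ∣ ((n:ℤ)*x + y) := natdvd_int (Nat.gcd_dvd_right _ _)
  have hep' : (e:ℤ) ∣ ((n:ℤ)*x' + y') := hee ▸ natdvd_int (Nat.gcd_dvd_right _ _)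
  have hNcast : ((N:ℕ):ℤ) = (e:ℤ)*(d:ℤ) := by exact_mod_cast (mul_comm d e ▸ hk1).symm
  have hdvd1 : ((N:ℕ):ℤ) ∣ ((n:ℤ)*x + y)*((n:ℤ)*x' - y') := hNcast ▸ mul_dvd_mul hep hdm'
  have hdvd2 : ((N:ℕ):ℤ) ∣ ((n:ℤ)*x - y)*((n:ℤ)*x' + y') := by
    rw [hNcast, mul_comm ((e:ℤ)) ((d:ℤ))]
    exact mul_dvd_mul hdm hep'
  have hdiff : ((N:ℕ):ℤ) ∣ 2*(n:ℤ)*(x'*y - x*y') := by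
    have hid : 2*(n:ℤ)*(x'*y - x*y') =
        ((n:ℤ)*x + y)*((n:ℤ)*x' - y') - ((n:ℤ)*x - y)*((n:ℤ)*x' + y') := by ring
    rw [hid]; exact dvd_sub hdvd1 hdvd2
  have hcop2 : IsCoprime ((N:ℕ):ℤ) 2 := by
    rw [Int.isCoprime_iff_gcd_eq_one]; simpa [Int.gcd] using copN2 n
  have hcopn : IsCoprime ((N:ℕ):ℤ) (n:ℤ) := by
    rw [Int.isCoprime_iff_gcd_eq_one]; simpa [Int.gcd] using copNn n
  have hu : ((N:ℕ):ℤ) ∣ (x'*y - x*y') := by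
    have h1 : ((N:ℕ):ℤ) ∣ 2*((n:ℤ)*(x'*y - x*y')) := by rw [← mul_assoc]; exact hdiff
    exact hcopn.dvd_of_dvd_mul_left (hcop2.dvd_of_dvd_mul_left h1)
  obtain ⟨k, hk⟩ := hu
  have hBrahma : (x*x' + 6*y*y')^2 + 6*(x'*y - x*y')^2 = ((N:ℕ):ℤ)^2 := by
    linear_combination (x'^2 + 6*y'^2) * hsol + ((N:ℕ):ℤ) * hsol'
  have hk0 : k = 0 := by
    by_contra hk0
    have hk1' : 1 ≤ k^2 := by
      have h1 : k^2 ≠ 0 := pow_ne_zero _ hk0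
      have h2 : 0 ≤ k^2 := sq_nonneg k
      omega
    rw [hk] at hBrahma
    nlinarith [sq_nonneg (x*x' + 6*y*y'), sq_nonneg ((N:ℕ):ℤ)]
  have hu0 : x'*y = x*y' := by rw [hk0, mul_zero] at hk; linarith [sub_eq_zero.mp hk]
  set v := x*x' + 6*y*y' with hv
  have h1 : x * ((N:ℕ):ℤ) = x' * v := by
    rw [← hsol']; rw [hv]; linear_combination (-6*y') * hu0
  have h2 : x' * ((N:ℕ):ℤ) = x * v := by
    rw [← hsol]; rw [hv]; linear_combination (6*y) * hu0
  have hvN : v = ((N:ℕ):ℤ) := by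
    have hsum : (x + x') * ((N:ℕ):ℤ) = (x + x') * v := by linarith
    exact (mul_left_cancel₀ (by linarith : (x:ℤ) + x' ≠ 0) hsum).symm
  have hxx : x = x' := by
    rw [hvN] at h1
    exact mul_right_cancel₀ (by linarith) h1
  refine ⟨hxx, ?_⟩
  rw [← hxx] at hu0
  rcases mul_eq_zero.mp (show x*(y - y') = 0 by linear_combination hu0) with h | h
  · linarith
  · linarith

lemma no2 (a b c : ℤ) : a^2+6*b^2 ≠ 12*c^2+2 := by
  intro h
  have hall : ∀ u v w : ZMod 3, u^2+6*v^2 ≠ 12*w^2+2 := by decide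
  have h8 := congrArg (fun z : ℤ => (z : ZMod 3)) h
  push_cast at h8
  exact hall a b c h8

lemma no3 (a b c : ℤ) : a^2+6*b^2 ≠ 18*c^2+3 := by
  intro h
  have h3 : (3:ℤ) ∣ a^2 := ⟨6*c^2+1-2*b^2, by linarith⟩
  have h3a : (3:ℤ) ∣ a := Int.prime_three.dvd_of_dvd_pow h3
  obtain ⟨a₁, rfl⟩ := h3a
  have h' : 3*a₁^2+2*b^2 = 6*c^2+1 := by linarith [h]
  have hall : ∀ u v w : ZMod 8, 3*u^2+2*v^2 ≠ 6*w^2+1 := by decide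
  have h8 := congrArg (fun z : ℤ => (z : ZMod 8)) h'
  push_cast at h8
  exact hall a₁ b c h8

lemma no0 (b c : ℤ) : 6*b^2 ≠ 6*c^2+1 := by
  intro h
  have h1 : (2:ℤ) ∣ 6*b^2 - 6*c^2 := ⟨3*b^2-3*c^2, by ring⟩
  omega

lemma boundAB (N : ℕ) (hN : 1 ≤ N) : ∃ A B : ℕ, N < (A+1)*(B+1) ∧ A^2 + 6*B^2 < 5*N := by
  set m := N*N/6 with hm
  set s := Nat.sqrt m with hs
  set B := Nat.sqrt s with hB
  set A := N / (B+1) with hA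
  have h6m : 6*m ≤ N*N := by
    have := Nat.div_mul_le_self (N*N) 6
    omega
  have h6m' : N*N < 6*m+6 := by
    have h1 := Nat.div_add_mod (N*N) 6
    have h2 : N*N % 6 < 6 := Nat.mod_lt _ (by norm_num)
    omega
  have hBs : B*B ≤ s := by have := Nat.sqrt_le' s; nlinarith [this]
  have hss : s*s ≤ m := by have := Nat.sqrt_le' m; nlinarith [this]
  have hB4 : B^2*B^2 ≤ m := by
    calc B^2*B^2 = (B*B)*(B*B) := by ring
    _ ≤ s*s := Nat.mul_le_mul hBs hBs
    _ ≤ m := hss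
  have hsB : s < (B+1)*(B+1) := by have := Nat.lt_succ_sqrt' s; nlinarith [this]
  have hms : m < (s+1)*(s+1) := by have := Nat.lt_succ_sqrt' m; nlinarith [this]
  have hBp4 : m < (B+1)^2*(B+1)^2 := by
    have h1 : s+1 ≤ (B+1)*(B+1) := hsB
    calc m < (s+1)*(s+1) := hms
    _ ≤ ((B+1)*(B+1))*((B+1)*(B+1)) := Nat.mul_le_mul h1 h1
    _ = (B+1)^2*(B+1)^2 := by ring
  have hA1 : A*(B+1) ≤ N := Nat.div_mul_le_self N (B+1)
  have hN1 : N < (A+1)*(B+1) := by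
    have h1 := Nat.div_add_mod N (B+1)
    rw [← hA] at h1
    have h2 : N % (B+1) < B+1 := Nat.mod_lt _ (by omega)
    have h3 : (A+1)*(B+1) = (B+1)*A + (B+1) := by ring
    omega
  refine ⟨A, B, hN1, ?_⟩
  -- A⁴ < 6 N²
  have hfact1 : A^2*(B+1)^2 ≤ N*N := by
    calc A^2*(B+1)^2 = (A*(B+1))*(A*(B+1)) := by ring
    _ ≤ N*N := Nat.mul_le_mul hA1 hA1
  have hfact2 : N*N < 6*((B+1)^2*(B+1)^2) := by omega
  have hA4 : A^2*A^2 < 6*(N*N) := by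
    by_contra hcon
    push_neg at hcon
    have h1 : (6*(N*N))*((B+1)^2*(B+1)^2) ≤ (A^2*A^2)*((B+1)^2*(B+1)^2) :=
      Nat.mul_le_mul_right _ hcon
    have h2 : (A^2*A^2)*((B+1)^2*(B+1)^2) = (A^2*(B+1)^2)*(A^2*(B+1)^2) := by ring
    have h3 : (A^2*(B+1)^2)*(A^2*(B+1)^2) ≤ (N*N)*(N*N) := Nat.mul_le_mul hfact1 hfact1
    have h4 : (N*N)*(N*N) < (N*N)*(6*((B+1)^2*(B+1)^2)) :=
      mul_lt_mul_of_pos_left hfact2 (by positivity)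
    have h5 : (N*N)*(6*((B+1)^2*(B+1)^2)) = (6*(N*N))*((B+1)^2*(B+1)^2) := by ring
    omega
  have hB4' : (6*B^2)*(6*B^2) ≤ 6*(N*N) := by
    calc (6*B^2)*(6*B^2) = 36*(B^2*B^2) := by ring
    _ ≤ 36*m := Nat.mul_le_mul_left _ hB4
    _ ≤ 6*(N*N) := by omega
  -- conclude
  have h2A : 2*A^2 < 5*N := by
    by_contra hcon
    push_neg at hcon
    have h1 : (5*N)*(5*N) ≤ (2*A^2)*(2*A^2) := Nat.mul_le_mul hcon hcon
    have h2 : (2*A^2)*(2*A^2) = 4*(A^2*A^2) := by ring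
    have h3 : (5*N)*(5*N) = 25*(N*N) := by ring
    omega
  have h2B : 2*(6*B^2) < 5*N := by
    by_contra hcon
    push_neg at hcon
    have h1 : (5*N)*(5*N) ≤ (2*(6*B^2))*(2*(6*B^2)) := Nat.mul_le_mul hcon hcon
    have h2 : (2*(6*B^2))*(2*(6*B^2)) = 4*((6*B^2)*(6*B^2)) := by ring
    have h3 : (5*N)*(5*N) = 25*(N*N) := by ring
    have h4 : 4*((6*B^2)*(6*B^2)) ≤ 24*(N*N) := by omega
    have h5 : 1 ≤ N*N := by nlinarith
    omega
  omega

lemma intdvd_nat {d : ℕ} {z : ℤ} (h : (d:ℤ) ∣ z) : d ∣ z.natAbs :=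
  Int.natCast_dvd_natCast.mp (Int.dvd_natAbs.mpr h)

lemma surjPhi (n : ℕ) (d : ℕ) (hd : d ∣ 6*n^2+1) :
    ∃ x y : ℤ, 1 ≤ x ∧ x^2+6*y^2 = ((6*n^2+1:ℕ):ℤ) ∧
      Nat.gcd (6*n^2+1) ((n:ℤ)*x - y).natAbs = d := by
  set N := 6*n^2+1 with hNdef
  have hNpos : 0 < N := by positivity
  set e := N / d with he
  have hde : d * e = N := Nat.mul_div_cancel' hd
  have hdpos : 0 < d := by
    rcases Nat.eq_zero_or_pos d with h | h
    · rw [h] at hde; simp at hde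
    · exact h
  have hepos : 0 < e := by
    rcases Nat.eq_zero_or_pos e with h | h
    · rw [h] at hde; simp at hde
    · exact h
  haveI : NeZero d := ⟨by omega⟩
  haveI : NeZero e := ⟨by omega⟩
  have hNc : ((N:ℕ):ℤ) = 6*(n:ℤ)^2+1 := by rw [hNdef]; push_cast; ring
  -- Step 1: find (ξ,η) ≠ 0 with d ∣ nξ-η, e ∣ nξ+η and N ∣ ξ²+6η², 0 < Q < 5N
  obtain ⟨A, B, hcard, hbound⟩ := boundAB N hNpos
  have main : ∃ ξ η : ℤ, ¬(ξ = 0 ∧ η = 0) ∧ (d:ℤ) ∣ (n:ℤ)*ξ - η ∧ (e:ℤ) ∣ (n:ℤ)*ξ + η ∧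
      ξ^2 + 6*η^2 < 5*((N:ℕ):ℤ) := by
    set box : Finset (ℤ × ℤ) := Finset.Icc (0:ℤ) A ×ˢ Finset.Icc (0:ℤ) B with hbox
    have hboxcard : box.card = (A+1)*(B+1) := by
      rw [hbox, Finset.card_product]
      rw [Int.card_Icc, Int.card_Icc]
      simp
    have hcard2 : Fintype.card (ZMod d × ZMod e) < box.card := by
      rw [Fintype.card_prod, ZMod.card, ZMod.card, hboxcard, hde]
      exact hcard
    obtain ⟨p, hp, q, hq, hne, hfeq⟩ :=
      Finset.exists_ne_map_eq_of_card_lt_of_maps_to (t := (Finset.univ : Finset (ZMod d × ZMod e)))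
        (by simpa using hcard2)
        (fun (a : ℤ × ℤ) _ => Finset.mem_univ (((a.2 - (n:ℤ)*a.1 : ℤ) : ZMod d), ((a.2 + (n:ℤ)*a.1 : ℤ) : ZMod e)))
    refine ⟨p.1 - q.1, p.2 - q.2, ?_, ?_, ?_, ?_⟩
    · intro ⟨h1, h2⟩
      apply hne
      have : p.1 = q.1 := by linarith [sub_eq_zero.mp h1]
      have : p.2 = q.2 := by linarith [sub_eq_zero.mp h2]
      exact Prod.ext ‹p.1 = q.1› ‹p.2 = q.2›
    · have h1 : ((p.2 - (n:ℤ)*p.1 : ℤ) : ZMod d) = ((q.2 - (n:ℤ)*q.1 : ℤ) : ZMod d) :=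
        congrArg Prod.fst hfeq
      rw [ZMod.intCast_eq_intCast_iff] at h1
      have h2 := Int.ModEq.dvd h1
      have : ((d:ℕ):ℤ) ∣ ((q.2 - (n:ℤ)*q.1) - (p.2 - (n:ℤ)*p.1)) := h2
      have h3 : ((n:ℤ)*(p.1 - q.1) - (p.2 - q.2)) = ((q.2 - (n:ℤ)*q.1) - (p.2 - (n:ℤ)*p.1)) := by ring
      rw [h3]; exact this
    · have h1 : ((p.2 + (n:ℤ)*p.1 : ℤ) : ZMod e) = ((q.2 + (n:ℤ)*q.1 : ℤ) : ZMod e) :=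
        congrArg Prod.snd hfeq
      rw [ZMod.intCast_eq_intCast_iff] at h1
      have h2 := Int.ModEq.dvd h1
      have h3 : ((n:ℤ)*(p.1 - q.1) + (p.2 - q.2)) = -((q.2 + (n:ℤ)*q.1) - (p.2 + (n:ℤ)*p.1)) := by ring
      rw [h3]; exact (h2.neg_right)
    · -- bounds
      rw [hbox] at hp hq
      simp only [Finset.mem_product, Finset.mem_Icc] at hp hq
      have hb1 : |p.1 - q.1| ≤ (A:ℤ) := by rw [abs_le]; omega
      have hb2 : |p.2 - q.2| ≤ (B:ℤ) := by rw [abs_le]; omega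
      have hs1 : (p.1 - q.1)^2 ≤ (A:ℤ)^2 := by
        rw [← sq_abs]; exact pow_le_pow_left₀ (abs_nonneg _) hb1 2
      have hs2 : (p.2 - q.2)^2 ≤ (B:ℤ)^2 := by
        rw [← sq_abs]; exact pow_le_pow_left₀ (abs_nonneg _) hb2 2
      have hcast : ((A:ℤ))^2 + 6*((B:ℤ))^2 < 5*((N:ℕ):ℤ) := by exact_mod_cast hbound
      linarith
  obtain ⟨ξ, η, hne0, hdm, hem, hQlt⟩ := main
  -- N ∣ Q
  have hNQ : ((N:ℕ):ℤ) ∣ ξ^2 + 6*η^2 := by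
    have hid : ξ^2 + 6*η^2 = ((N:ℕ):ℤ)*ξ^2 - 6*(((n:ℤ)*ξ - η)*((n:ℤ)*ξ + η)) := by
      rw [hNc]; ring
    rw [hid]
    refine dvd_sub (dvd_mul_right _ _) ?_
    have : ((N:ℕ):ℤ) = (d:ℤ)*(e:ℤ) := by exact_mod_cast hde.symm
    rw [this]
    exact (mul_dvd_mul hdm hem).mul_left 6
  have hQpos : 0 < ξ^2 + 6*η^2 := by
    rcases (not_and_or.mp hne0) with h | h
    · have : 0 < ξ^2 := by positivity
      nlinarith [sq_nonneg η]
    · have : 0 < η^2 := by positivity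
      nlinarith [sq_nonneg ξ]
  obtain ⟨mq, hmq⟩ := hNQ
  have hNz : (0:ℤ) < ((N:ℕ):ℤ) := by exact_mod_cast hNpos
  have hmq1 : 1 ≤ mq := by nlinarith
  have hmq4 : mq ≤ 4 := by nlinarith
  -- get a solution with the congruences
  have sol : ∃ x y : ℤ, ¬(x = 0 ∧ y = 0) ∧ x^2+6*y^2 = ((N:ℕ):ℤ) ∧
      (d:ℤ) ∣ (n:ℤ)*x - y ∧ (e:ℤ) ∣ (n:ℤ)*x + y := by
    have hecop : e ∣ N := ⟨d, by rw [← hde]; ring⟩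
    interval_cases mq
    · exact ⟨ξ, η, hne0, by linarith, hdm, hem⟩
    · exfalso
      exact no2 ξ η (n:ℤ) (by rw [hmq, hNc]; ring)
    · exfalso
      exact no3 ξ η (n:ℤ) (by rw [hmq, hNc]; ring)
    · -- halve twice
      have h4 : ξ^2+6*η^2 = 24*(n:ℤ)^2+4 := by rw [hmq, hNc]; ring
      have hxe : Even ξ := by
        rcases Int.even_or_odd ξ with h | h
        · exact h
        · exfalso
          obtain ⟨u, hu⟩ := odd_sq_eq ξ h
          rw [hu] at h4
          omega
      obtain ⟨x1, rfl⟩ := hxe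
      have hx4 : (x1+x1)^2 = 4*x1^2 := by ring
      rw [hx4] at h4
      have hye : Even η := by
        rcases Int.even_or_odd η with h | h
        · exact h
        · exfalso
          obtain ⟨u, hu⟩ := odd_sq_eq η h
          rw [hu] at h4
          omega
      obtain ⟨y1, rfl⟩ := hye
      have hy4 : (y1+y1)^2 = 4*y1^2 := by ring
      rw [hy4] at h4
      refine ⟨x1, y1, ?_, ?_, ?_, ?_⟩
      · intro ⟨h1, h2⟩
        exact hne0 ⟨by omega, by omega⟩
      · rw [hNc]; linarith
      · have hdo : Nat.Coprime d 2 := Nat.Coprime.coprime_dvd_left hd (copN2 n)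
        have hcop : IsCoprime (d:ℤ) 2 := by
          rw [Int.isCoprime_iff_gcd_eq_one]; simpa [Int.gcd] using hdo
        have h2 : (d:ℤ) ∣ 2*((n:ℤ)*x1 - y1) := by
          have hh : 2*((n:ℤ)*x1 - y1) = (n:ℤ)*(x1+x1) - (y1+y1) := by ring
          rw [hh]; exact hdm
        exact hcop.dvd_of_dvd_mul_left h2
      · have heo : Nat.Coprime e 2 := Nat.Coprime.coprime_dvd_left hecop (copN2 n)
        have hcop : IsCoprime (e:ℤ) 2 := by
          rw [Int.isCoprime_iff_gcd_eq_one]; simpa [Int.gcd] using heo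
        have h2 : (e:ℤ) ∣ 2*((n:ℤ)*x1 + y1) := by
          have hh : 2*((n:ℤ)*x1 + y1) = (n:ℤ)*(x1+x1) + (y1+y1) := by ring
          rw [hh]; exact hem
        exact hcop.dvd_of_dvd_mul_left h2
  obtain ⟨x0, y0, hne0', hsol0, hdm0, hem0⟩ := sol
  -- x0 ≠ 0
  have hx0ne : x0 ≠ 0 := by
    intro h0
    rw [h0] at hsol0
    apply no0 y0 (n:ℤ)
    rw [← hNc]; linarith
  -- normalize sign
  have sol2 : ∃ x y : ℤ, 1 ≤ x ∧ x^2+6*y^2 = ((N:ℕ):ℤ) ∧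
      (d:ℤ) ∣ (n:ℤ)*x - y ∧ (e:ℤ) ∣ (n:ℤ)*x + y := by
    rcases lt_or_gt_of_ne hx0ne with h | h
    · refine ⟨-x0, -y0, by omega, by linarith [hsol0], ?_, ?_⟩
      · have : (n:ℤ)*(-x0) - (-y0) = -((n:ℤ)*x0 - y0) := by ring
        rw [this]; exact hdm0.neg_right
      · have : (n:ℤ)*(-x0) + (-y0) = -((n:ℤ)*x0 + y0) := by ring
        rw [this]; exact hem0.neg_right
    · exact ⟨x0, y0, by omega, hsol0, hdm0, hem0⟩
  obtain ⟨x, y, hx1, hsol, hdmx, hemx⟩ := sol2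
  refine ⟨x, y, hx1, hsol, ?_⟩
  -- identify the gcd
  set d2 := Nat.gcd N ((n:ℤ)*x - y).natAbs with hd2
  set e2 := Nat.gcd N ((n:ℤ)*x + y).natAbs with he2
  have hkey : d2 * e2 = N := keyProd n N dvd_rfl x y hsol
  have hdd2 : d ∣ d2 := Nat.dvd_gcd hd (intdvd_nat hdmx)
  have hee2 : e ∣ e2 := Nat.dvd_gcd ⟨d, by rw [← hde]; ring⟩ (intdvd_nat hemx)
  obtain ⟨s, hs⟩ := hdd2
  obtain ⟨t, ht⟩ := hee2
  have hst : (d*e)*(s*t) = (d*e)*1 := by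
    calc (d*e)*(s*t) = (d*s)*(e*t) := by ring
    _ = d2 * e2 := by rw [hs, ht]
    _ = N := hkey
    _ = (d*e)*1 := by rw [Nat.mul_one, hde]
  have hst1 : s*t = 1 :=
    Nat.eq_of_mul_eq_mul_left (show 0 < d*e by positivity) hst
  have hs1 : s = 1 := Nat.eq_one_of_dvd_one ⟨t, hst1.symm⟩
  rw [hs, hs1, mul_one]

lemma poly5 (c : ℤ) : polygonal 5 c = c * (3*c - 1) / 2 := by
  unfold polygonal; norm_num

lemma poly5_eq (c w : ℤ) (h : c*(3*c-1) = 2*w) : polygonal 5 c = w := by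
  rw [poly5, h, Int.mul_ediv_cancel_left w two_ne_zero]

lemma two_dvd_poly (c : ℤ) : 2 ∣ c*(3*c-1) := by
  rcases Int.even_or_odd c with ⟨k, rfl⟩ | ⟨k, rfl⟩
  · exact ⟨k*(3*(k+k)-1), by ring⟩
  · exact ⟨(2*k+1)*(3*k+1), by ring⟩

lemma polyIff (n a b : ℕ) (hab : a + b = n) (ha : 1 ≤ a) :
    (∃ c:ℤ, (a:ℤ)*(b:ℤ) = polygonal 5 c) ↔
    (∃ s:ℤ, 1 ≤ s ∧ s^2 + 6*((b:ℤ)-(a:ℤ))^2 = ((6*n^2+1:ℕ):ℤ)) := by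
  have hn : ((a:ℤ) + b) = (n:ℤ) := by exact_mod_cast congrArg (Nat.cast : ℕ → ℤ) hab
  have hNc : ((6*n^2+1:ℕ):ℤ) = 6*(n:ℤ)^2+1 := by push_cast; ring
  constructor
  · rintro ⟨c, hc⟩
    obtain ⟨w, hw⟩ := two_dvd_poly c
    have hab' : (a:ℤ)*b = w := by rw [hc, poly5_eq c w hw]
    refine ⟨|6*c - 1|, ?_, ?_⟩
    · have h0 : 6*c - 1 ≠ 0 := by omega
      have := abs_pos.mpr h0
      omega
    · rw [hNc, sq_abs]
      have hsq : (6*c-1)^2 = 24*((a:ℤ)*b) + 1 := by rw [hab']; linear_combination 12*hw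
      rw [hsq]
      linear_combination (6*((a:ℤ)+b) + 6*(n:ℤ))*hn
  · rintro ⟨s, hs1, hs⟩
    rw [hNc] at hs
    have hsq : s^2 = 24*((a:ℤ)*b) + 1 := by
      rw [show (24:ℤ)*((a:ℤ)*b) + 1 = 6*((a:ℤ)+b)^2 + 1 - 6*((b:ℤ)-a)^2 by ring, hn]
      linarith
    have hodd : s % 2 = 1 := by
      rcases Int.even_or_odd s with ⟨k, rfl⟩ | ⟨k, rfl⟩
      · exfalso
        have h4 : 4*k^2 = 24*((a:ℤ)*(b:ℤ))+1 := by linear_combination hsq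
        generalize hK : k^2 = K at h4
        generalize hF : (a:ℤ)*(b:ℤ) = F at h4
        omega
      · omega
    have h3 : s % 3 ≠ 0 := by
      intro h0
      obtain ⟨t, rfl⟩ : (3:ℤ) ∣ s := Int.dvd_of_emod_eq_zero h0
      have h9 : 9*t^2 = 24*((a:ℤ)*(b:ℤ))+1 := by linear_combination hsq
      generalize hK : t^2 = K at h9
      generalize hF : (a:ℤ)*(b:ℤ) = F at h9
      omega
    obtain ⟨c, hc⟩ : ∃ c:ℤ, 6*c - 1 = s ∨ 6*c - 1 = -s := by
      have h6 : s % 6 = 1 ∨ s % 6 = 5 := by omega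
      rcases h6 with h6 | h6
      · refine ⟨-(s/6), Or.inr ?_⟩
        omega
      · refine ⟨s/6 + 1, Or.inl ?_⟩
        omega
    refine ⟨c, ?_⟩
    have h2ab : c*(3*c-1) = 2*((a:ℤ)*b) := by
      rcases hc with h | h
      · have h1 : (6*c-1)^2 = 24*((a:ℤ)*b)+1 := by rw [h]; exact hsq
        have h12 : 12*(c*(3*c-1)) = 12*(2*((a:ℤ)*b)) := by linear_combination h1
        linarith
      · have h1 : (6*c-1)^2 = 24*((a:ℤ)*b)+1 := by
          rw [h]; rw [show (-s)^2 = s^2 by ring]; exact hsq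
        have h12 : 12*(c*(3*c-1)) = 12*(2*((a:ℤ)*b)) := by linear_combination h1
        linarith
    exact (poly5_eq c ((a:ℤ)*b) h2ab).symm

theorem stmt_5 (n : ℕ) (hn : 0 < n) :
    rmt 5 1 n = ((6 * n ^ 2 + 1).divisors.card - 1) / 2 := by
  classical
  have hn1 : 1 ≤ (n:ℤ) := by exact_mod_cast hn
  have hNc : ((6*n^2+1:ℕ):ℤ) = 6*(n:ℤ)^2+1 := by push_cast; ring
  have hNpos : 0 < 6*n^2+1 := by positivity
  -- the finset of solutions (x,y), x ≥ 1
  set SF := (Finset.Icc (1:ℤ) (3*(n:ℤ)) ×ˢ Finset.Icc (-(n:ℤ)) (n:ℤ)).filter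
      (fun p => p.1^2 + 6*p.2^2 = ((6*n^2+1:ℕ):ℤ)) with hSF
  have memSF : ∀ p : ℤ×ℤ, p ∈ SF ↔ (1 ≤ p.1 ∧ p.1^2+6*p.2^2 = ((6*n^2+1:ℕ):ℤ)) := by
    intro p
    rw [hSF, Finset.mem_filter, Finset.mem_product, Finset.mem_Icc, Finset.mem_Icc]
    constructor
    · rintro ⟨⟨⟨h1,_⟩,_⟩, h4⟩; exact ⟨h1, h4⟩
    · rintro ⟨h1, h4⟩
      rw [hNc] at h4
      refine ⟨⟨⟨h1, ?_⟩, ?_, ?_⟩, by rw [hNc]; exact h4⟩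
      · by_contra hc; push_neg at hc
        have h5 : 3*(n:ℤ)+1 ≤ p.1 := by omega
        nlinarith [sq_nonneg p.2]
      · by_contra hc; push_neg at hc
        have h5 : p.2 ≤ -(n:ℤ)-1 := by omega
        nlinarith [sq_nonneg p.1, sq_nonneg (p.2 + (n:ℤ) + 1)]
      · by_contra hc; push_neg at hc
        have h5 : (n:ℤ)+1 ≤ p.2 := by omega
        nlinarith [sq_nonneg p.1, sq_nonneg (p.2 - (n:ℤ) - 1)]
  have hSFcard : SF.card = (6*n^2+1).divisors.card := by
    apply Finset.card_bij (fun p _ => Nat.gcd (6*n^2+1) ((n:ℤ)*p.1 - p.2).natAbs)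
    · intro p hp
      rw [Nat.mem_divisors]
      exact ⟨Nat.gcd_dvd_left _ _, by omega⟩
    · intro p hp q hq heq
      rw [memSF] at hp hq
      obtain ⟨hx, hy⟩ := injPhi n p.1 p.2 q.1 q.2 hp.1 hq.1 hp.2 hq.2 heq
      exact Prod.ext hx hy
    · intro d hd
      rw [Nat.mem_divisors] at hd
      obtain ⟨x, y, hx1, hsol, hgcd⟩ := surjPhi n d hd.1
      exact ⟨(x,y), (memSF _).mpr ⟨hx1, hsol⟩, hgcd⟩
  -- the finset of y-values
  set YF := SF.image Prod.snd with hYF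
  have hYFcard : YF.card = SF.card := Finset.card_image_of_injOn (by
    intro p hp q hq h2
    rw [Finset.mem_coe, memSF] at hp hq
    have e1 : p.1^2 = q.1^2 := by
      have h5 := hp.2
      rw [h2] at h5
      linarith [hq.2]
    have e2 : p.1 = q.1 := by nlinarith [hp.1, hq.1]
    exact Prod.ext e2 h2)
  have memYF : ∀ y : ℤ, y ∈ YF ↔ ∃ x:ℤ, 1 ≤ x ∧ x^2+6*y^2 = ((6*n^2+1:ℕ):ℤ) := by
    intro y
    rw [hYF, Finset.mem_image]
    constructor
    · rintro ⟨p, hp, rfl⟩; rw [memSF] at hp; exact ⟨p.1, hp.1, hp.2⟩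
    · rintro ⟨x, hx1, hs⟩; exact ⟨(x,y), (memSF _).mpr ⟨hx1, hs⟩, rfl⟩
  have hpar : ∀ y:ℤ, y ∈ YF → Even (y - (n:ℤ)) := by
    intro y hy
    rw [memYF] at hy
    obtain ⟨x,hx1,hs⟩ := hy
    exact parity_lemma x y n (by rw [← hNc]; exact hs)
  have hbndy : ∀ y:ℤ, y ∈ YF → y ≤ (n:ℤ) := by
    intro y hy
    rw [memYF] at hy
    obtain ⟨x,hx1,hs⟩ := hy
    rw [hNc] at hs
    nlinarith [sq_nonneg (y - (n:ℤ)), sq_nonneg (y + (n:ℤ))]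
  have hnYF : (n:ℤ) ∈ YF := (memYF _).mpr ⟨1, le_refl 1, by rw [hNc]; ring⟩
  have hnegYF : ∀ y:ℤ, y ∈ YF → -y ∈ YF := by
    intro y hy
    rw [memYF] at hy ⊢
    obtain ⟨x,hx1,hs⟩ := hy
    exact ⟨x, hx1, by rw [show (-y)^2 = y^2 by ring]; exact hs⟩
  -- count splits
  set Pf := YF.filter (fun y => 0 < y) with hPf
  set Qf := YF.filter (fun y => 1 ≤ y ∧ y ≤ (n:ℤ)-2) with hQf
  set Zf := YF.filter (fun y => y = 0) with hZf
  set Mf := YF.filter (fun y => y < 0) with hMf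
  have hsplit : YF.card = Pf.card + (Zf.card + Mf.card) := by
    rw [← Finset.card_filter_add_card_filter_not (s := YF) (p := fun y => 0 < y)]
    congr 1
    have hu : YF.filter (fun y => ¬ 0 < y) = Zf ∪ Mf := by
      ext y
      simp only [hZf, hMf, Finset.mem_union, Finset.mem_filter]
      constructor
      · rintro ⟨hy, h0⟩
        rcases eq_or_lt_of_le (by omega : y ≤ 0) with h | h
        · exact Or.inl ⟨hy, h⟩
        · exact Or.inr ⟨hy, by omega⟩
      · rintro (⟨hy, h⟩ | ⟨hy, h⟩) <;> exact ⟨hy, by omega⟩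
    rw [hu, Finset.card_union_of_disjoint]
    rw [Finset.disjoint_left]
    intro y hy hy'
    rw [hZf, Finset.mem_filter] at hy
    rw [hMf, Finset.mem_filter] at hy'
    omega
  have hMP : Mf.card = Pf.card := by
    apply Finset.card_bij (fun y _ => -y)
    · intro y hy
      rw [hMf, Finset.mem_filter] at hy
      rw [hPf, Finset.mem_filter]
      exact ⟨hnegYF y hy.1, by omega⟩
    · intro y hy z hz h
      omega
    · intro y hy
      rw [hPf, Finset.mem_filter] at hy
      refine ⟨-y, ?_, by omega⟩
      rw [hMf, Finset.mem_filter]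
      exact ⟨hnegYF y hy.1, by omega⟩
  have hPQ : Pf = insert (n:ℤ) Qf := by
    ext y
    rw [Finset.mem_insert, hPf, hQf, Finset.mem_filter, Finset.mem_filter]
    constructor
    · rintro ⟨hy, h0⟩
      by_cases hyn : y = (n:ℤ)
      · exact Or.inl hyn
      · obtain ⟨k, hk⟩ := hpar y hy
        have := hbndy y hy
        exact Or.inr ⟨hy, by omega, by omega⟩
    · rintro (rfl | ⟨hy, h1, h2⟩)
      · exact ⟨hnYF, by omega⟩
      · exact ⟨hy, by omega⟩
  have hPcard : Pf.card = Qf.card + 1 := by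
    rw [hPQ, Finset.card_insert_of_notMem]
    intro hmem
    rw [hQf, Finset.mem_filter] at hmem
    omega
  have hZ1 : Zf.card ≤ 1 := by
    have : Zf ⊆ {0} := by
      intro y hy
      rw [hZf, Finset.mem_filter] at hy
      simp [hy.2]
    calc Zf.card ≤ ({0}: Finset ℤ).card := Finset.card_le_card this
    _ = 1 := Finset.card_singleton 0
  have h0n : (0:ℤ) ∈ YF → 2 ≤ n := by
    intro h0
    rw [memYF] at h0
    obtain ⟨x, hx1, hs⟩ := h0
    rw [hNc] at hs
    by_contra hc
    push_neg at hc
    have hn1' : n = 1 := by omega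
    rw [hn1'] at hs
    push_cast at hs
    have hx2 : x ≤ 2 := by nlinarith [sq_nonneg (x - 3)]
    interval_cases x <;> norm_num at hs
  set YQ0 := YF.filter (fun y => 0 ≤ y ∧ y ≤ (n:ℤ)-2) with hYQ0
  have hYQ0card : YQ0.card = Qf.card + Zf.card := by
    have hu : YQ0 = Qf ∪ Zf := by
      ext y
      simp only [hYQ0, hQf, hZf, Finset.mem_union, Finset.mem_filter]
      constructor
      · rintro ⟨hy, h0, h2⟩
        rcases eq_or_lt_of_le h0 with h | h
        · exact Or.inr ⟨hy, h.symm⟩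
        · exact Or.inl ⟨hy, by omega, h2⟩
      · rintro (⟨hy, h1, h2⟩ | ⟨hy, h⟩)
        · exact ⟨hy, by omega, h2⟩
        · subst h
          have h2n := h0n hy
          have : (2:ℤ) ≤ (n:ℤ) := by exact_mod_cast h2n
          exact ⟨hy, le_refl 0, by omega⟩
    rw [hu, Finset.card_union_of_disjoint]
    rw [Finset.disjoint_left]
    intro y hy hy'
    rw [hQf, Finset.mem_filter] at hy
    rw [hZf, Finset.mem_filter] at hy'
    omega
  -- connect rmt to YQ0
  have hrmt : rmt 5 1 n = YQ0.card := by
    rw [rmt]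
    set T := {p : ℕ × ℕ | 0 < p.1 ∧ p.1 ≤ p.2 ∧ p.1 + p.2 = n ∧
      ∃ c : ℤ, (((5:ℕ) = 3 ∨ (5:ℕ) = 4) → 0 < c) ∧ (p.1 : ℤ) * p.2 = (1:ℕ) * polygonal 5 c} with hT
    have hinj : Set.InjOn (fun p : ℕ×ℕ => (p.2:ℤ) - (p.1:ℤ)) T := by
      intro p hp q hq h
      simp only [hT, Set.mem_setOf_eq] at hp hq
      have h1 := hp.2.2.1
      have h2 := hq.2.2.1
      have h' : (p.2:ℤ) - (p.1:ℤ) = (q.2:ℤ) - (q.1:ℤ) := h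
      have e1 : p.1 = q.1 := by omega
      have e2 : p.2 = q.2 := by omega
      exact Prod.ext e1 e2
    have himg : (fun p : ℕ×ℕ => (p.2:ℤ) - (p.1:ℤ)) '' T = ↑YQ0 := by
      ext y
      simp only [Set.mem_image, Finset.coe_filter, Set.mem_setOf_eq, hYQ0]
      constructor
      · rintro ⟨p, hp, rfl⟩
        simp only [hT, Set.mem_setOf_eq] at hp
        obtain ⟨h1, h2, h3, c, hc5, hceq⟩ := hp
        rw [Nat.cast_one, one_mul] at hceq
        obtain ⟨s, hs1, hs⟩ := (polyIff n p.1 p.2 h3 h1).mp ⟨c, hceq⟩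
        refine ⟨?_, by omega, ?_⟩
        · exact (memYF _).mpr ⟨s, hs1, hs⟩
        · have hc3 : (p.1:ℤ) + (p.2:ℤ) = (n:ℤ) := by exact_mod_cast congrArg (Nat.cast : ℕ → ℤ) h3
          omega
      · rintro ⟨hy, h0, h2⟩
        obtain ⟨k, hk⟩ := hpar y hy
        have hyn := hbndy y hy
        set a : ℕ := (-k).toNat with ha
        have hka : (a:ℤ) = -k := Int.toNat_of_nonneg (by omega)
        have h2a : 2*(a:ℤ) = (n:ℤ) - y := by omega
        have han : a ≤ n := by
          have : (a:ℤ) ≤ (n:ℤ) := by omega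
          exact_mod_cast this
        set b : ℕ := n - a with hb
        have hbc : (b:ℤ) = (n:ℤ) - (a:ℤ) := by
          rw [hb]; push_cast [han]; ring
        have hba : (b:ℤ) - (a:ℤ) = y := by omega
        refine ⟨(a, b), ?_, by simpa using hba⟩
        simp only [hT, Set.mem_setOf_eq]
        have hsum : a + b = n := by omega
        have h1a : 0 < a := by
          have : (0:ℤ) < (a:ℤ) := by omega
          exact_mod_cast this
        refine ⟨h1a, ?_, hsum, ?_⟩
        · have : (a:ℤ) ≤ (b:ℤ) := by omega
          exact_mod_cast this
        · rw [memYF] at hy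
          obtain ⟨x, hx1, hs⟩ := hy
          obtain ⟨c, hc⟩ := (polyIff n a b hsum h1a).mpr ⟨x, hx1, by rw [hba]; exact hs⟩
          exact ⟨c, by omega, by rw [Nat.cast_one, one_mul]; exact hc⟩
    calc Set.ncard T = ((fun p : ℕ×ℕ => (p.2:ℤ) - (p.1:ℤ)) '' T).ncard :=
          (Set.ncard_image_of_injOn hinj).symm
    _ = (↑YQ0 : Set ℤ).ncard := by rw [himg]
    _ = YQ0.card := Set.ncard_coe_finset _
  rw [hrmt]
  omega
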